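/- Let x, y be real numbers with x > 0 and x + y > 0, and define sequences (x_n), (y_n) by (x₀, y₀) = (x, y) and (x_{n+1}, y_{n+1}) = (μ₁(x_n, y_n), μ₂(x_n, y_n)). Then both sequences converge and there exists a real number L > 0 with lim_{n→∞} x_n = lim_{n→∞} y_n = L. -/

import Mathlib

noncomputable def mu1 (x y : ℝ) : ℝ :=
  (2 * x + Real.sqrt (2 * x * (x + y))) / 4

noncomputable def mu2 (x y : ℝ) : ℝ :=
  x * (6 * Real.sqrt (2 * x * (x + y)) - y - 3 * x) /
    (2 * (2 * x + Real.sqrt (2 * x * (x + y))))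

lemma spos {x y : ℝ} (hx : 0 < x) (hxy : 0 < x + y) :
    0 < Real.sqrt (2 * x * (x + y)) :=
  Real.sqrt_pos.mpr (by positivity)

lemma mu1_eq {x y : ℝ} : mu1 x y = (x + Real.sqrt (2 * x * (x + y)) / 2) / 2 := by
  unfold mu1; ring

lemma mu1_pos {x y : ℝ} (hx : 0 < x) (hxy : 0 < x + y) : 0 < mu1 x y := by
  have := spos hx hxy; unfold mu1; linarith

lemma mu_sum {x y : ℝ} (hx : 0 < x) (hxy : 0 < x + y) :
    mu1 x y + mu2 x y =
      4 * x * Real.sqrt (2 * x * (x + y)) / (2 * x + Real.sqrt (2 * x * (x + y))) := by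
  have hs := spos hx hxy
  have hs2 : Real.sqrt (2 * x * (x + y)) ^ 2 = 2 * x * (x + y) :=
    Real.sq_sqrt (by positivity)
  unfold mu1 mu2
  generalize hgen : Real.sqrt (2 * x * (x + y)) = s at *
  have hden : 2 * x + s ≠ 0 := by linarith
  field_simp
  linear_combination 2 * hs2

lemma mu_sum_pos {x y : ℝ} (hx : 0 < x) (hxy : 0 < x + y) :
    0 < mu1 x y + mu2 x y := by
  rw [mu_sum hx hxy]
  have hs := spos hx hxy
  positivity

lemma mu_prod {x y : ℝ} (hx : 0 < x) (hxy : 0 < x + y) :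
    2 * mu1 x y * (mu1 x y + mu2 x y) = 2 * x * Real.sqrt (2 * x * (x + y)) := by
  rw [mu_sum hx hxy, mu1_eq]
  have hs := spos hx hxy
  generalize hgen : Real.sqrt (2 * x * (x + y)) = s at *
  have hden : 2 * x + s ≠ 0 := by linarith
  field_simp
  ring

lemma c_step {x y : ℝ} (hx : 0 < x) (hxy : 0 < x + y) :
    Real.sqrt (2 * mu1 x y * (mu1 x y + mu2 x y)) / 2 =
      Real.sqrt (x * (Real.sqrt (2 * x * (x + y)) / 2)) := by
  rw [mu_prod hx hxy]
  have hs := (spos hx hxy).le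
  rw [show 2 * x * Real.sqrt (2 * x * (x + y)) =
      (2:ℝ)^2 * (x * (Real.sqrt (2 * x * (x + y)) / 2)) by ring,
    Real.sqrt_mul (by positivity), Real.sqrt_sq (by norm_num)]
  ring

lemma sqrt_le_mean {u v : ℝ} (hu : 0 ≤ u) (hv : 0 ≤ v) :
    Real.sqrt (u * v) ≤ (u + v) / 2 := by
  rw [Real.sqrt_mul hu]
  nlinarith [sq_nonneg (Real.sqrt u - Real.sqrt v), Real.sq_sqrt hu, Real.sq_sqrt hv]

theorem stmt18 (x y : ℝ) (hx : 0 < x) (hxy : 0 < x + y)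
    (X Y : ℕ → ℝ) (hX0 : X 0 = x) (hY0 : Y 0 = y)
    (hXs : ∀ n, X (n + 1) = mu1 (X n) (Y n))
    (hYs : ∀ n, Y (n + 1) = mu2 (X n) (Y n)) :
    ∃ L : ℝ, 0 < L ∧
      Filter.Tendsto X Filter.atTop (nhds L) ∧
      Filter.Tendsto Y Filter.atTop (nhds L) := by
  have hpos : ∀ n, 0 < X n ∧ 0 < X n + Y n := by
    intro n
    induction n with
    | zero => rw [hX0, hY0]; exact ⟨hx, hxy⟩
    | succ n ih =>
      rw [hXs, hYs]
      exact ⟨mu1_pos ih.1 ih.2, mu_sum_pos ih.1 ih.2⟩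
  set C : ℕ → ℝ := fun n => Real.sqrt (2 * X n * (X n + Y n)) / 2 with hC
  have hCpos : ∀ n, 0 < C n := fun n =>
    div_pos (spos (hpos n).1 (hpos n).2) two_pos
  have hXrec : ∀ n, X (n + 1) = (X n + C n) / 2 := by
    intro n; rw [hXs, mu1_eq]
  have hCrec : ∀ n, C (n + 1) = Real.sqrt (X n * C n) := by
    intro n
    show Real.sqrt (2 * X (n+1) * (X (n+1) + Y (n+1))) / 2 = _
    rw [hXs, hYs]
    exact c_step (hpos n).1 (hpos n).2
  -- shifted sequences
  set a : ℕ → ℝ := fun n => X (n + 1) with ha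
  set c : ℕ → ℝ := fun n => C (n + 1) with hc
  have hapos : ∀ n, 0 < a n := fun n => (hpos (n+1)).1
  have hcpos : ∀ n, 0 < c n := fun n => hCpos (n+1)
  have hca : ∀ n, c n ≤ a n := by
    intro n
    rw [hc, ha]
    simp only
    rw [hCrec n, hXrec n]
    exact sqrt_le_mean (hpos n).1.le (hCpos n).le
  have harec : ∀ n, a (n + 1) = (a n + c n) / 2 := fun n => hXrec (n+1)
  have hcrec : ∀ n, c (n + 1) = Real.sqrt (a n * c n) := fun n => hCrec (n+1)
  have hcmono : Monotone c := by
    apply monotone_nat_of_le_succ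
    intro n
    rw [hcrec n]
    calc c n = Real.sqrt (c n * c n) := by
            rw [Real.sqrt_mul_self (hcpos n).le]
      _ ≤ Real.sqrt (a n * c n) :=
            Real.sqrt_le_sqrt (mul_le_mul_of_nonneg_right (hca n) (hcpos n).le)
  have hamono : ∀ n, a (n + 1) ≤ a n := by
    intro n; rw [harec n]; linarith [hca n]
  have haub : ∀ n, a n ≤ a 0 := by
    intro n
    induction n with
    | zero => exact le_refl _
    | succ n ih => exact le_trans (hamono n) ih
  have hgap : ∀ n, a (n + 1) - c (n + 1) ≤ (a n - c n) / 2 := by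
    intro n
    rw [harec n, hcrec n]
    have h1 : c n ≤ Real.sqrt (a n * c n) := by
      calc c n = Real.sqrt (c n * c n) := by rw [Real.sqrt_mul_self (hcpos n).le]
        _ ≤ Real.sqrt (a n * c n) :=
            Real.sqrt_le_sqrt (mul_le_mul_of_nonneg_right (hca n) (hcpos n).le)
    linarith
  have hgapn : ∀ n, a n - c n ≤ (a 0 - c 0) * (1/2)^n := by
    intro n
    induction n with
    | zero => simp
    | succ n ih =>
      calc a (n+1) - c (n+1) ≤ (a n - c n) / 2 := hgap n
        _ ≤ (a 0 - c 0) * (1/2)^n / 2 := by linarith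
        _ = (a 0 - c 0) * (1/2)^(n+1) := by ring
  have hbdd : BddAbove (Set.range c) := by
    refine ⟨a 0, ?_⟩
    rintro _ ⟨n, rfl⟩
    exact le_trans (hca n) (haub n)
  set L := ⨆ n, c n with hL
  have hcL : Filter.Tendsto c Filter.atTop (nhds L) :=
    tendsto_atTop_ciSup hcmono hbdd
  have hLpos : 0 < L := lt_of_lt_of_le (hcpos 0) (le_ciSup hbdd 0)
  have hgap0 : Filter.Tendsto (fun n => a n - c n) Filter.atTop (nhds 0) := by
    have hgeo : Filter.Tendsto (fun n : ℕ => (a 0 - c 0) * (1/2)^n)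
        Filter.atTop (nhds 0) := by
      have := tendsto_pow_atTop_nhds_zero_of_lt_one (by norm_num : (0:ℝ) ≤ 1/2)
        (by norm_num : (1/2:ℝ) < 1)
      simpa using this.const_mul (a 0 - c 0)
    exact squeeze_zero (fun n => by linarith [hca n]) hgapn hgeo
  have haL : Filter.Tendsto a Filter.atTop (nhds L) := by
    have := hgap0.add hcL
    simpa using this
  have hXL : Filter.Tendsto X Filter.atTop (nhds L) :=
    (Filter.tendsto_add_atTop_iff_nat 1).mp haL
  -- Y in terms of X and C
  have hYeq : ∀ n, Y n = 2 * (C n)^2 / X n - X n := by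
    intro n
    have h := hpos n
    have hC2 : (C n)^2 = X n * (X n + Y n) / 2 := by
      show (Real.sqrt (2 * X n * (X n + Y n)) / 2)^2 = _
      rw [div_pow, Real.sq_sqrt (by nlinarith [h.1, h.2] : (0:ℝ) ≤ 2 * X n * (X n + Y n))]
      ring
    have hXn : X n ≠ 0 := h.1.ne'
    rw [hC2]
    field_simp
    ring
  have hYL : Filter.Tendsto Y Filter.atTop (nhds L) := by
    rw [← Filter.tendsto_add_atTop_iff_nat 1]
    have heq : (fun n => Y (n + 1)) = fun n => 2 * (c n)^2 / a n - a n := by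
      funext n; exact hYeq (n+1)
    rw [heq]
    have h1 : Filter.Tendsto (fun n => 2 * (c n)^2 / a n - a n)
        Filter.atTop (nhds (2 * L^2 / L - L)) := by
      exact (((hcL.pow 2).const_mul 2).div haL hLpos.ne').sub haL
    have : 2 * L^2 / L - L = L := by field_simp; ring
    rwa [this] at h1
  exact ⟨L, hLpos, hXL, hYL⟩
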